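/- Let φ : ℝ → ℝ be a nonnegative convex differentiable loss with γ-Lipschitz derivative, and for a fixed sample (x_t, y_t) with ‖x_t‖ ≤ 1 and y_t ∈ {−1, +1} define ℓ_t(w) = φ(y_t ⟨w, x_t⟩). Let Ω ⊆ ℝ^d be a nonempty closed convex set, η > 0, w_t ∈ Ω, w_* ∈ Ω, and w_{t+1} = π_Ω(w_t − η ∇ℓ_t(w_t)). Then ℓ_t(w_t) − ℓ_t(w_*) ≤ (‖w_t − w_*‖² − ‖w_{t+1} − w_*‖²)/(2η) + 2ηγ ℓ_t(w_t). -/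

import Mathlib

open RealInnerProductSpace

set_option maxHeartbeats 1000000

open RealInnerProductSpace

lemma descent_lemma (φ φ' : ℝ → ℝ) (γ : ℝ) (hγ : 0 < γ)
    (hderiv : ∀ z, HasDerivAt φ (φ' z) z)
    (hlip : ∀ z z', |φ' z - φ' z'| ≤ γ * |z - z'|) (a b : ℝ) :
    φ b ≤ φ a + φ' a * (b - a) + γ / 2 * (b - a) ^ 2 := by
  set h := b - a with hh
  set ψ : ℝ → ℝ := fun t => φ (a + t * h) - t * (φ' a * h) - γ / 2 * (t ^ 2 * h ^ 2) with hψdef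
  have hψ : ∀ t : ℝ, HasDerivAt ψ (φ' (a + t * h) * h - φ' a * h - γ * (t * h ^ 2)) t := by
    intro t
    have h1 : HasDerivAt (fun t : ℝ => a + t * h) h t := by
      simpa using ((hasDerivAt_id t).mul_const h).const_add a
    have h2 : HasDerivAt (fun t : ℝ => φ (a + t * h)) (φ' (a + t * h) * h) t :=
      (hderiv (a + t * h)).comp t h1
    have h3 : HasDerivAt (fun t : ℝ => t * (φ' a * h)) (φ' a * h) t := by
      simpa using (hasDerivAt_id t).mul_const (φ' a * h)
    have h4 : HasDerivAt (fun t : ℝ => γ / 2 * (t ^ 2 * h ^ 2)) (γ * (t * h ^ 2)) t := by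
      have := ((hasDerivAt_pow 2 t).mul_const (h ^ 2)).const_mul (γ / 2)
      refine this.congr_deriv ?_
      norm_num
      ring
    exact (h2.sub h3).sub h4
  have hanti : AntitoneOn ψ (Set.Ici (0 : ℝ)) := by
    apply antitoneOn_of_deriv_nonpos (convex_Ici 0)
    · exact fun t _ => (hψ t).differentiableAt.continuousAt.continuousWithinAt
    · exact fun t _ => (hψ t).differentiableAt.differentiableWithinAt
    · intro t ht
      rw [(hψ t).deriv]
      have ht0 : (0:ℝ) < t := by simpa [interior_Ici] using ht
      have habs : |φ' (a + t * h) - φ' a| ≤ γ * (t * |h|) := by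
        calc |φ' (a + t * h) - φ' a| ≤ γ * |a + t * h - a| := hlip _ _
          _ = γ * (t * |h|) := by rw [add_sub_cancel_left, abs_mul, abs_of_pos ht0]
      have hkey : (φ' (a + t * h) - φ' a) * h ≤ γ * (t * h ^ 2) := by
        calc (φ' (a + t * h) - φ' a) * h ≤ |(φ' (a + t * h) - φ' a) * h| := le_abs_self _
          _ = |φ' (a + t * h) - φ' a| * |h| := abs_mul _ _
          _ ≤ γ * (t * |h|) * |h| := mul_le_mul_of_nonneg_right habs (abs_nonneg _)
          _ = γ * (t * (|h| * |h|)) := by ring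
          _ = γ * (t * h ^ 2) := by rw [← abs_mul, abs_mul_self, sq]
      linarith
  have h10 := hanti (Set.self_mem_Ici) (by norm_num : (1:ℝ) ∈ Set.Ici 0) zero_le_one
  simp only [hψdef] at h10
  norm_num at h10
  have hab2 : a + h = b := by rw [hh]; ring
  rw [hab2] at h10
  linarith

lemma self_bound (φ φ' : ℝ → ℝ) (γ : ℝ) (hγ : 0 < γ)
    (hnonneg : ∀ z, 0 ≤ φ z)
    (hderiv : ∀ z, HasDerivAt φ (φ' z) z)
    (hlip : ∀ z z', |φ' z - φ' z'| ≤ γ * |z - z'|) (z : ℝ) :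
    φ' z ^ 2 ≤ 2 * γ * φ z := by
  set c := φ' z / γ with hc
  have hφc : φ' z = γ * c := by rw [hc, mul_div_cancel₀ _ hγ.ne']
  have hd := descent_lemma φ φ' γ hγ hderiv hlip z (z - c)
  have h0 := hnonneg (z - c)
  have hsimp : (z - c - z) = -c := by ring
  rw [hsimp] at hd
  nlinarith [hγ, sq_nonneg c]

lemma convex_grad_ineq (φ φ' : ℝ → ℝ) (hconv : ConvexOn ℝ Set.univ φ)
    (hderiv : ∀ z, HasDerivAt φ (φ' z) z) (a b : ℝ) :
    φ a - φ b ≤ φ' a * (a - b) := by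
  rcases lt_trichotomy a b with hab | hab | hab
  · have := hconv.le_slope_of_hasDerivAt (Set.mem_univ a) (Set.mem_univ b) hab (hderiv a)
    rw [slope_def_field] at this
    have hba : 0 < b - a := by linarith
    rw [le_div_iff₀ hba] at this
    nlinarith [this]
  · simp [hab]
  · have := hconv.slope_le_of_hasDerivAt (Set.mem_univ b) (Set.mem_univ a) hab (hderiv a)
    rw [slope_def_field] at this
    have hba : 0 < a - b := by linarith
    rw [div_le_iff₀ hba] at this
    linarith


/-- one step of projected SGD on the smooth nonnegative convex loss
`ℓ_t(w) = φ(y_t ⟨w, x_t⟩)` satisfies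
`ℓ_t(w_t) − ℓ_t(w_*) ≤ (‖w_t − w_*‖² − ‖w_{t+1} − w_*‖²)/(2η) + 2ηγ ℓ_t(w_t)`. -/
theorem sgd_one_step_smooth {d : ℕ} (φ φ' : ℝ → ℝ) (γ : ℝ) (hγ : 0 < γ)
    (hnonneg : ∀ z, 0 ≤ φ z) (hconv : ConvexOn ℝ Set.univ φ)
    (hderiv : ∀ z, HasDerivAt φ (φ' z) z)
    (hlip : ∀ z z', |φ' z - φ' z'| ≤ γ * |z - z'|)
    (xt : EuclideanSpace ℝ (Fin d)) (yt : ℝ) (hx : ‖xt‖ ≤ 1) (hy : yt = 1 ∨ yt = -1)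
    (Ω : Set (EuclideanSpace ℝ (Fin d))) (hΩne : Ω.Nonempty)
    (hΩcl : IsClosed Ω) (hΩcv : Convex ℝ Ω)
    (η : ℝ) (hη : 0 < η)
    (wt wstar wt1 : EuclideanSpace ℝ (Fin d)) (hwt : wt ∈ Ω) (hws : wstar ∈ Ω)
    (hmem : wt1 ∈ Ω)
    (hproj : ∀ u ∈ Ω,
      ‖wt - η • gradient (fun w => φ (yt * ⟪w, xt⟫)) wt - wt1‖ ≤
        ‖wt - η • gradient (fun w => φ (yt * ⟪w, xt⟫)) wt - u‖) :
    φ (yt * ⟪wt, xt⟫) - φ (yt * ⟪wstar, xt⟫) ≤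
      (‖wt - wstar‖ ^ 2 - ‖wt1 - wstar‖ ^ 2) / (2 * η) +
        2 * η * γ * φ (yt * ⟪wt, xt⟫) := by
  set z := yt * ⟪wt, xt⟫ with hz
  set zs := yt * ⟪wstar, xt⟫ with hzs
  set g : EuclideanSpace ℝ (Fin d) := (φ' z * yt) • xt with hg
  -- Step A: compute the gradient
  have hgrad : gradient (fun w : EuclideanSpace ℝ (Fin d) => φ (yt * ⟪w, xt⟫)) wt = g := by
    have hL : HasFDerivAt (fun w : EuclideanSpace ℝ (Fin d) => yt * ⟪w, xt⟫)
        (yt • innerSL ℝ xt) wt := by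
      have hfun : (fun w : EuclideanSpace ℝ (Fin d) => yt * ⟪w, xt⟫)
          = fun w => (yt • innerSL ℝ xt) w := by
        funext w
        simp only [ContinuousLinearMap.smul_apply, innerSL_apply_apply, smul_eq_mul]
        rw [real_inner_comm]
      rw [hfun]
      exact (yt • innerSL ℝ xt).hasFDerivAt
    have hF : HasFDerivAt (fun w : EuclideanSpace ℝ (Fin d) => φ (yt * ⟪w, xt⟫))
        (φ' z • (yt • innerSL ℝ xt)) wt := (hderiv z).comp_hasFDerivAt wt hL
    have hdual : (InnerProductSpace.toDual ℝ (EuclideanSpace ℝ (Fin d))) g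
        = φ' z • (yt • innerSL ℝ xt) := by
      apply ContinuousLinearMap.ext
      intro w
      rw [InnerProductSpace.toDual_apply_apply]
      simp only [ContinuousLinearMap.smul_apply, innerSL_apply_apply, smul_eq_mul, hg]
      rw [real_inner_smul_left, real_inner_comm]
      ring
    have : HasGradientAt (fun w : EuclideanSpace ℝ (Fin d) => φ (yt * ⟪w, xt⟫)) g wt := by
      rw [hasGradientAt_iff_hasFDerivAt, hdual]
      exact hF
    exact this.gradient
  rw [hgrad] at hproj
  set v : EuclideanSpace ℝ (Fin d) := wt - η • g with hv
  -- Step B: variational inequality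
  haveI : Nonempty ↑Ω := ⟨⟨wt1, hmem⟩⟩
  have heq : ‖v - wt1‖ = ⨅ w : Ω, ‖v - w‖ := by
    apply le_antisymm
    · exact le_ciInf fun w => hproj w w.2
    · exact ciInf_le ⟨0, fun x ⟨w, hw⟩ => hw ▸ norm_nonneg _⟩ (⟨wt1, hmem⟩ : Ω)
  have hvar : ⟪v - wt1, wstar - wt1⟫ ≤ 0 :=
    (norm_eq_iInf_iff_real_inner_le_zero hΩcv hmem).1 heq wstar hws
  -- Step C: contraction
  have hC : ‖wt1 - wstar‖ ^ 2 ≤ ‖v - wstar‖ ^ 2 := by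
    have hexp : ‖v - wstar‖ ^ 2 =
        ‖v - wt1‖ ^ 2 + 2 * ⟪v - wt1, wt1 - wstar⟫ + ‖wt1 - wstar‖ ^ 2 := by
      have : v - wstar = (v - wt1) + (wt1 - wstar) := by abel
      rw [this, norm_add_sq_real]
    have hneg : ⟪v - wt1, wt1 - wstar⟫ = -⟪v - wt1, wstar - wt1⟫ := by
      rw [← inner_neg_right]
      congr 1
      abel
    nlinarith [sq_nonneg ‖v - wt1‖, hvar]
  -- Step D: expand ‖v - wstar‖²
  have hD : ‖v - wstar‖ ^ 2 = ‖wt - wstar‖ ^ 2 - 2 * η * ⟪wt - wstar, g⟫ + η ^ 2 * ‖g‖ ^ 2 := by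
    have : v - wstar = (wt - wstar) - η • g := by rw [hv]; abel
    rw [this, norm_sub_sq_real, real_inner_smul_right, norm_smul]
    simp [abs_of_pos hη, mul_pow]
    ring
  -- Step E: inner product identity
  have hE : ⟪wt - wstar, g⟫ = φ' z * (z - zs) := by
    rw [hg, real_inner_smul_right, inner_sub_left, hz, hzs]
    ring
  -- Step F: norm of gradient
  have hy2 : yt * yt = 1 := by rcases hy with h | h <;> rw [h] <;> norm_num
  have hF2 : ‖g‖ ^ 2 ≤ φ' z ^ 2 := by
    rw [hg, norm_smul]
    have hx0 : (0:ℝ) ≤ ‖xt‖ := norm_nonneg _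
    have : ‖φ' z * yt‖ ^ 2 = φ' z ^ 2 := by
      rw [Real.norm_eq_abs, sq_abs]
      nlinarith [hy2]
    rw [mul_pow, this]
    have hn2 : ‖xt‖ ^ 2 ≤ 1 := by nlinarith [norm_nonneg xt]
    nlinarith [mul_le_mul_of_nonneg_left hn2 (sq_nonneg (φ' z))]
  have hsb : φ' z ^ 2 ≤ 2 * γ * φ z := self_bound φ φ' γ hγ hnonneg hderiv hlip z
  have hcv : φ z - φ zs ≤ φ' z * (z - zs) := convex_grad_ineq φ φ' hconv hderiv z zs
  -- combine
  have h2η : (0:ℝ) < 2 * η := by linarith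
  rw [← sub_le_iff_le_add, le_div_iff₀ h2η]
  have hφz := hnonneg z
  nlinarith [hC, hD, hE, hF2, hsb, hcv, mul_pos hη hη, mul_pos hη hγ,
    mul_nonneg (mul_nonneg hη.le hγ.le) hφz, sq_nonneg η]
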